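/- Let m : Ω → S² be a unit vector field on an interval Ω ⊂ ℝ such that m⊗m is differentiable at a point x with m continuous at x. Then m is differentiable at x and m'ᵢ(x) = Σⱼ (mᵢmⱼ)'(x) mⱼ(x). -/

import Mathlib

open Filter Asymptotics

lemma key_ineq (u v : Fin 3 → ℝ) (hu : ∑ j, (u j)^2 = 1) (hv : ∑ j, (v j)^2 = 1)
    (hc : 0 ≤ ∑ j, u j * v j) :
    ∑ j, (u j - v j)^2 ≤ ∑ j, ∑ k, (u j * u k - v j * v k)^2 := by
  simp only [Fin.sum_univ_three] at *
  have h1 : (0:ℝ) ≤ 1 - (u 0 * v 0 + u 1 * v 1 + u 2 * v 2) := by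
    nlinarith [sq_nonneg (u 0 - v 0), sq_nonneg (u 1 - v 1), sq_nonneg (u 2 - v 2)]
  nlinarith [sq_nonneg (u 0 - v 0), sq_nonneg (u 1 - v 1), sq_nonneg (u 2 - v 2),
    mul_nonneg hc h1]

theorem deriv_of_vector_field_from_line_field
    (a b : ℝ) (Ω : Set ℝ) (hΩ : Ω = Set.Ioo a b)
    (m : ℝ → Fin 3 → ℝ) (x : ℝ) (hx : x ∈ Ω)
    (hunit : ∀ y ∈ Ω, ∑ j, (m y j)^2 = 1)
    (d : Fin 3 → Fin 3 → ℝ)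
    (hd : ∀ i j, HasDerivAt (fun y => m y i * m y j) (d i j) x)
    (hcont : ∀ i, ContinuousAt (fun y => m y i) x) :
    ∀ i, HasDerivAt (fun y => m y i) (∑ j, d i j * m x j) x := by
  intro i
  have hΩopen : IsOpen Ω := hΩ ▸ isOpen_Ioo
  have hΩnhds : ∀ᶠ y in nhds x, y ∈ Ω := hΩopen.mem_nhds hx
  -- the inner product with m x
  set c : ℝ → ℝ := fun y => ∑ j, m y j * m x j with hc_def
  have hccont : ContinuousAt c x := by
    simp only [hc_def, Fin.sum_univ_three]
    exact (((hcont 0).mul continuousAt_const).add ((hcont 1).mul continuousAt_const)).add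
      ((hcont 2).mul continuousAt_const)
  have hcx : c x = 1 := by
    have := hunit x hx
    simp only [hc_def]
    rw [← this]
    exact Finset.sum_congr rfl fun j _ => (sq (m x j)).symm
  have hcpos : ∀ᶠ y in nhds x, 0 < c y := by
    have : Set.Ioi (0:ℝ) ∈ nhds (c x) := by rw [hcx]; exact Ioi_mem_nhds one_pos
    exact hccont this
  -- remainder term
  set r : ℝ → ℝ := fun y => m y i * (∑ j, (m y j - m x j)^2) / 2 with hr_def
  set g : ℝ → ℝ := fun y => ∑ j, (m y i * m y j) * m x j with hg_def
  -- the identity on Ω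
  have hid : ∀ y ∈ Ω, m y i = g y + r y := by
    intro y hy
    have huy := hunit y hy
    have hux := hunit x hx
    simp only [Fin.sum_univ_three] at huy hux
    show m y i = (∑ j, (m y i * m y j) * m x j) + (m y i * (∑ j, (m y j - m x j)^2) / 2)
    simp only [Fin.sum_univ_three]
    linear_combination (-(m y i) / 2) * huy + (-(m y i) / 2) * hux
  -- Q: Frobenius bound
  set Q : ℝ → ℝ := fun y => ∑ j, ∑ k, (m y j * m y k - m x j * m x k)^2 with hQ_def
  have hQO : Q =O[nhds x] fun y => (y - x) * (y - x) := by
    apply Asymptotics.IsBigO.fun_sum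
    intro j _
    apply Asymptotics.IsBigO.fun_sum
    intro k _
    have h1 : (fun y => m y j * m y k - m x j * m x k) =O[nhds x] fun y => y - x :=
      (hd j k).isBigO_sub
    simpa [sq] using h1.mul h1
  have hsqo : (fun y : ℝ => (y - x) * (y - x)) =o[nhds x] fun y => y - x := by
    have h1 : (fun y : ℝ => y - x) =o[nhds x] (fun _ => (1:ℝ)) := by
      rw [Asymptotics.isLittleO_one_iff]
      simpa using (continuous_id.tendsto x).sub_const x
    simpa using h1.mul_isBigO (Asymptotics.isBigO_refl (fun y : ℝ => y - x) (nhds x))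
  -- r is O(Q)
  have hrQ : r =O[nhds x] Q := by
    rw [Asymptotics.isBigO_iff]
    refine ⟨1, ?_⟩
    filter_upwards [hΩnhds, hcpos] with y hy hcy
    have huy := hunit y hy
    have hux := hunit x hx
    have hmbd : |m y i| ≤ 1 := by
      have h1 : (m y i)^2 ≤ ∑ j, (m y j)^2 :=
        Finset.single_le_sum (fun j _ => sq_nonneg (m y j)) (Finset.mem_univ i)
      rw [huy] at h1
      nlinarith [sq_abs (m y i), abs_nonneg (m y i)]
    have hq0 : 0 ≤ ∑ j, (m y j - m x j)^2 :=
      Finset.sum_nonneg fun j _ => sq_nonneg _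
    have hkey : ∑ j, (m y j - m x j)^2 ≤ Q y :=
      key_ineq (m y) (m x) huy hux hcy.le
    have hQ0 : 0 ≤ Q y := hq0.trans hkey
    rw [hr_def]
    simp only [norm_mul, Real.norm_eq_abs, one_mul]
    rw [abs_of_nonneg hQ0]
    have habs : |m y i * (∑ j, (m y j - m x j)^2) / 2|
        = |m y i| * (∑ j, (m y j - m x j)^2) / 2 := by
      rw [abs_div, abs_mul, abs_of_nonneg hq0]; norm_num
    rw [habs]
    nlinarith [mul_le_mul_of_nonneg_right hmbd hq0]
  have hro : r =o[nhds x] fun y => y - x := hrQ.trans_isLittleO (hQO.trans_isLittleO hsqo)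
  have hrderiv : HasDerivAt r 0 x := by
    rw [hasDerivAt_iff_isLittleO]
    have hrx : r x = 0 := by simp [hr_def]
    simpa [hrx] using hro
  have hgderiv : HasDerivAt g (∑ j, d i j * m x j) x := by
    apply HasDerivAt.fun_sum
    intro j _
    exact (hd i j).mul_const (m x j)
  have hsum : HasDerivAt (fun y => g y + r y) (∑ j, d i j * m x j) x := by
    simpa using hgderiv.fun_add hrderiv
  apply hsum.congr_of_eventuallyEq
  filter_upwards [hΩnhds] with y hy
  exact hid y hy
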